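/- arXiv:1903.03535 — 4 statements merged into one kernel-verified Lean document; each statement's English description precedes it below -/
import Mathlib

section
/- Let B ⊆ Z/nZ. Then g_B has coefficients in F_{q^r} and is Galois coprime if and only if B is a union of H-orbits, no two of which lie in the same G-orbit, and r divides the multiplicative order of q modulo m_k for every k ∈ B, where m_k = n/gcd(n, k). -/
open Polynomial

/-- Coefficientwise application of `x ↦ x^(q^i)` (the `i`-th power of the Frobenius
`σ : x ↦ x^q`) to a polynomial. -/
noncomputable def polyGal {L : Type*} [Field L] (q i : ℕ) (g : Polynomial L) : Polynomial L :=
  ∑ j ∈ g.support, Polynomial.C ((g.coeff j) ^ (q ^ i)) * Polynomial.X ^ j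

/-- `g_B(x) = ∏_{k ∈ B} (x − ζ^k)` for a subset `B ⊆ ℤ/nℤ`. -/
noncomputable def gB {L : Type*} [Field L] {n : ℕ} [NeZero n] (ζ : L) (B : Finset (ZMod n)) :
    Polynomial L :=
  ∏ k ∈ B, (Polynomial.X - Polynomial.C (ζ ^ (ZMod.val k)))

section helpers

variable {L : Type*} [Field L] [DecidableEq L] {n : ℕ} [NeZero n] {ζ : L}

lemma hlp_pow_mod (hζ : IsPrimitiveRoot ζ n) (a : ℕ) : ζ ^ a = ζ ^ (a % n) := by
  conv_lhs => rw [← Nat.div_add_mod a n]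
  rw [pow_add, pow_mul, hζ.pow_eq_one, one_pow, one_mul]

lemma hlp_pow_modEq (hζ : IsPrimitiveRoot ζ n) {a b : ℕ} (h : a ≡ b [MOD n]) :
    ζ ^ a = ζ ^ b := by
  rw [hlp_pow_mod hζ a, hlp_pow_mod hζ b, h]

lemma hlp_f_inj (hζ : IsPrimitiveRoot ζ n) :
    Function.Injective (fun k : ZMod n => ζ ^ k.val) := by
  intro k k' h
  exact ZMod.val_injective n (hζ.pow_inj (ZMod.val_lt k) (ZMod.val_lt k') h)

lemma hlp_f_pow (hζ : IsPrimitiveRoot ζ n) (k : ZMod n) (c : ℕ) :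
    (ζ ^ k.val) ^ c = ζ ^ (((c : ZMod n) * k).val) := by
  rw [← pow_mul]
  apply hlp_pow_modEq hζ
  rw [← ZMod.natCast_eq_natCast_iff]
  rw [Nat.cast_mul, ZMod.natCast_rightInverse k, ZMod.natCast_rightInverse _]
  ring

lemma hlp_gB_eq (hζ : IsPrimitiveRoot ζ n) (B : Finset (ZMod n)) :
    gB ζ B = ∏ a ∈ B.image (fun k : ZMod n => ζ ^ k.val), (X - C a) := by
  rw [gB, Finset.prod_image (fun _ _ _ _ h => hlp_f_inj hζ h)]

lemma hlp_coprime_iff {s t : Finset L} :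
    IsCoprime (∏ a ∈ s, (X - C a)) (∏ a ∈ t, (X - C a)) ↔ Disjoint s t := by
  constructor
  · intro h
    rw [Finset.disjoint_left]
    intro a has hat
    exact Polynomial.not_isUnit_X_sub_C a
      (h.isUnit_of_dvd' (Finset.dvd_prod_of_mem _ has) (Finset.dvd_prod_of_mem _ hat))
  · intro h
    apply IsCoprime.prod_left; intro a ha
    apply IsCoprime.prod_right; intro b hb
    exact Polynomial.isCoprime_X_sub_C_of_isUnit_sub
      (sub_ne_zero_of_ne (fun e => Finset.disjoint_left.mp h ha (by rw [← e] at hb; exact hb))).isUnit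

lemma hlp_polyGal_map {q i : ℕ} (φ : L →+* L) (hφ : ∀ x : L, φ x = x ^ (q ^ i))
    (g : Polynomial L) : polyGal q i g = g.map φ := by
  rw [polyGal]
  conv_rhs => rw [g.as_sum_support_C_mul_X_pow]
  rw [Polynomial.map_sum]
  refine Finset.sum_congr rfl fun j _ => ?_
  rw [Polynomial.map_mul, Polynomial.map_C, Polynomial.map_pow, Polynomial.map_X, hφ]

lemma hlp_gB_map (hζ : IsPrimitiveRoot ζ n) (φ : L →+* L) (c : ℕ)
    (hφ : ∀ x : L, φ x = x ^ c) (hu : IsUnit ((c : ZMod n))) (B : Finset (ZMod n)) :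
    (gB ζ B).map φ = gB ζ (B.image (fun k => (c : ZMod n) * k)) := by
  rw [gB, Polynomial.map_prod, gB,
    Finset.prod_image (fun a _ b _ h => hu.mul_left_cancel h)]
  refine Finset.prod_congr rfl fun k _ => ?_
  rw [Polynomial.map_sub, Polynomial.map_X, Polynomial.map_C, hφ, hlp_f_pow hζ]

lemma hlp_key {q : ℕ} (hcop : Nat.Coprime n q) (k : ZMod n) (t : ℕ) :
    ((q : ZMod n) ^ t * k = k) ↔
      orderOf ((q : ZMod (n / Nat.gcd n (ZMod.val k)))) ∣ t := by
  have hn : 0 < n := Nat.pos_of_ne_zero (NeZero.ne n)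
  set a := ZMod.val k with ha
  set g := Nat.gcd n a with hg
  set m := n / g with hm
  have hk : ((a : ℕ) : ZMod n) = k := ZMod.natCast_rightInverse k
  have hmg : m * g = n := Nat.div_mul_cancel (Nat.gcd_dvd_left n a)
  have hag : a / g * g = a := Nat.div_mul_cancel (Nat.gcd_dvd_right n a)
  have hdvd : n ∣ a * m := ⟨a / g, by
    calc a * m = a / g * g * m := by rw [hag]
      _ = m * g * (a / g) := by ring
      _ = n * (a / g) := by rw [hmg]⟩
  constructor
  · intro hZ
    have h1 : ((a * q ^ t : ℕ) : ZMod n) = ((a * 1 : ℕ) : ZMod n) := by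
      rw [Nat.cast_mul, Nat.cast_mul, Nat.cast_pow, Nat.cast_one, hk, mul_one, mul_comm]
      exact hZ
    have h2 := Nat.ModEq.cancel_left_div_gcd hn ((ZMod.natCast_eq_natCast_iff _ _ _).mp h1)
    have h3 : ((q ^ t : ℕ) : ZMod m) = ((1 : ℕ) : ZMod m) :=
      (ZMod.natCast_eq_natCast_iff _ _ _).mpr h2
    rw [Nat.cast_pow, Nat.cast_one] at h3
    exact orderOf_dvd_iff_pow_eq_one.mpr h3
  · intro hd
    have h1 : (q : ZMod m) ^ t = 1 := orderOf_dvd_iff_pow_eq_one.mp hd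
    have h2 : q ^ t ≡ 1 [MOD m] := by
      refine (ZMod.natCast_eq_natCast_iff _ _ _).mp ?_
      rw [Nat.cast_pow, Nat.cast_one]; exact h1
    have h3 := (Nat.ModEq.mul_left' a h2).of_dvd hdvd
    have h4 : ((a * q ^ t : ℕ) : ZMod n) = ((a * 1 : ℕ) : ZMod n) :=
      (ZMod.natCast_eq_natCast_iff _ _ _).mpr h3
    rw [Nat.cast_mul, Nat.cast_mul, Nat.cast_pow, Nat.cast_one, hk, mul_one, mul_comm] at h4
    exact h4

lemma hlp_ord_pos {q : ℕ} (hcop : Nat.Coprime n q) (k : ZMod n) :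
    0 < orderOf ((q : ZMod (n / Nat.gcd n (ZMod.val k)))) := by
  have hn : 0 < n := Nat.pos_of_ne_zero (NeZero.ne n)
  set a := ZMod.val k with ha
  set g := Nat.gcd n a with hg
  set m := n / g with hm
  have hmg : m * g = n := Nat.div_mul_cancel (Nat.gcd_dvd_left n a)
  have hmpos : 0 < m := by
    rcases Nat.eq_zero_or_pos m with h | h
    · rw [h, zero_mul] at hmg; omega
    · exact h
  haveI : NeZero m := ⟨hmpos.ne'⟩
  have hmdvd : m ∣ n := ⟨g, hmg.symm⟩
  have hcq : Nat.Coprime q m := (Nat.Coprime.coprime_dvd_left hmdvd hcop).symm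
  obtain ⟨u, hu⟩ := (ZMod.isUnit_iff_coprime q m).mpr hcq
  rw [← hu, orderOf_units]
  exact orderOf_pos u

end helpers

/-- `g_B` has coefficients in `F_{q^r}` and is Galois coprime iff `B` is a
union of `H`-orbits (`H = ⟨q^r⟩ ≤ (ℤ/nℤ)ˣ`), no two of which lie in the same `G`-orbit
(`G = ⟨q⟩`), and `r ∣ ord(q mod m_k)` for every `k ∈ B`, where `m_k = n/gcd(n,k)`.
Here `ζ` is a primitive `n`-th root of unity in the splitting field `L` of `x^n − 1`
over `F_{q^r}`; membership of a coefficient `c` in `F_{q^r}` reads `c^(q^r) = c`, and the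
non-trivial elements of `Gal(F_{q^r}/F_q)` act as `x ↦ x^(q^i)`, `1 ≤ i < r`. -/
theorem stmt10 (p e q r n : ℕ) (hp : p.Prime) (he : 0 < e) (hq : q = p ^ e)
    (hr : 1 < r) [NeZero n] (hcop : Nat.Coprime n q)
    (L : Type*) [Field L] [Fintype L] [CharP L p]
    (ζ : L) (hζ : IsPrimitiveRoot ζ n)
    (B : Finset (ZMod n)) :
    ((∀ j : ℕ, ((gB ζ B).coeff j) ^ (q ^ r) = (gB ζ B).coeff j) ∧
      (∀ i : ℕ, 0 < i → i < r → IsCoprime (gB ζ B) (polyGal q i (gB ζ B)))) ↔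
    ((∀ k ∈ B, ((q : ZMod n)) ^ r * k ∈ B) ∧
      (∀ k ∈ B, ∀ k' ∈ B, (∃ t : ℕ, k' = (q : ZMod n) ^ t * k) →
        ∃ t : ℕ, k' = ((q : ZMod n) ^ r) ^ t * k) ∧
      (∀ k ∈ B, r ∣ orderOf ((q : ZMod (n / Nat.gcd n (ZMod.val k)))))) := by
  haveI : Fact p.Prime := ⟨hp⟩
  haveI : DecidableEq L := Classical.decEq L
  have hu : IsUnit ((q : ℕ) : ZMod n) := (ZMod.isUnit_iff_coprime q n).mpr hcop.symm
  -- the Frobenius powers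
  set φ : ℕ → (L →+* L) := fun i => iterateFrobenius L p (e * i) with hφdef
  have hφ : ∀ (i : ℕ) (x : L), φ i x = x ^ (q ^ i) := by
    intro i x
    rw [hφdef]
    simp only [iterateFrobenius_def]
    rw [hq, ← pow_mul]
  have himg : ∀ i : ℕ,
      (B.image fun k => ((q ^ i : ℕ) : ZMod n) * k) = B.image fun k => ((q : ZMod n)) ^ i * k := by
    intro i
    simp [Nat.cast_pow]
  have hmap : ∀ i : ℕ,
      polyGal q i (gB ζ B) = gB ζ (B.image fun k => ((q : ZMod n)) ^ i * k) := by
    intro i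
    rw [hlp_polyGal_map (φ i) (hφ i), hlp_gB_map hζ (φ i) (q ^ i) (hφ i)
      (by rw [Nat.cast_pow]; exact hu.pow i) B, himg i]
  have huipow : ∀ i : ℕ, IsUnit (((q : ZMod n)) ^ i) := fun i => hu.pow i
  have hinj : ∀ i : ℕ, Function.Injective (fun k : ZMod n => ((q : ZMod n)) ^ i * k) :=
    fun i a b hab => (huipow i).mul_left_cancel hab
  -- equivalence for the coefficient condition
  have e1 : (∀ j : ℕ, ((gB ζ B).coeff j) ^ (q ^ r) = (gB ζ B).coeff j) ↔
      (∀ k ∈ B, ((q : ZMod n)) ^ r * k ∈ B) := by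
    have hmapr : (gB ζ B).map (φ r) = gB ζ (B.image fun k => ((q : ZMod n)) ^ r * k) := by
      rw [hlp_gB_map hζ (φ r) (q ^ r) (hφ r)
        (by rw [Nat.cast_pow]; exact hu.pow r) B, himg r]
    constructor
    · intro h
      have hm : gB ζ (B.image fun k => ((q : ZMod n)) ^ r * k) = gB ζ B := by
        rw [← hmapr]
        ext j
        rw [Polynomial.coeff_map, hφ]
        exact h j
      have hroots := congrArg Polynomial.roots hm
      rw [hlp_gB_eq hζ, hlp_gB_eq hζ, Polynomial.roots_prod_X_sub_C,
        Polynomial.roots_prod_X_sub_C] at hroots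
      have hsets : B.image (fun k => ((q : ZMod n)) ^ r * k) = B :=
        Finset.image_injective (hlp_f_inj hζ) (Finset.val_injective hroots)
      intro k hk
      rw [← hsets]
      exact Finset.mem_image_of_mem _ hk
    · intro h
      have hsub : B.image (fun k => ((q : ZMod n)) ^ r * k) ⊆ B := by
        intro x hx
        obtain ⟨k, hk, rfl⟩ := Finset.mem_image.mp hx
        exact h k hk
      have hcard : (B.image (fun k => ((q : ZMod n)) ^ r * k)).card = B.card :=
        Finset.card_image_of_injective B (hinj r)
      have hsets : B.image (fun k => ((q : ZMod n)) ^ r * k) = B :=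
        Finset.eq_of_subset_of_card_le hsub hcard.ge
      intro j
      have hm : (gB ζ B).map (φ r) = gB ζ B := by rw [hmapr, hsets]
      have := congrArg (fun g => Polynomial.coeff g j) hm
      simpa [Polynomial.coeff_map, hφ] using this
  -- equivalence for the coprimality condition
  have e2 : ∀ i : ℕ, IsCoprime (gB ζ B) (polyGal q i (gB ζ B)) ↔
      (∀ k ∈ B, ∀ k' ∈ B, k ≠ ((q : ZMod n)) ^ i * k') := by
    intro i
    rw [hmap i, hlp_gB_eq hζ, hlp_gB_eq hζ, hlp_coprime_iff,
      Finset.disjoint_image (hlp_f_inj hζ), Finset.disjoint_left]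
    constructor
    · intro h k hk k' hk' heq
      exact h hk (Finset.mem_image.mpr ⟨k', hk', heq.symm⟩)
    · intro h a ha hmem
      obtain ⟨k', hk', hg⟩ := Finset.mem_image.mp hmem
      exact h a ha k' hk' hg.symm
  constructor
  · rintro ⟨h1, h2⟩
    have hP1 := e1.mp h1
    have hP2 : ∀ i : ℕ, 0 < i → i < r →
        ∀ k ∈ B, ∀ k' ∈ B, k ≠ ((q : ZMod n)) ^ i * k' :=
      fun i hi hir => (e2 i).mp (h2 i hi hir)
    have clos : ∀ s : ℕ, ∀ k ∈ B, (((q : ZMod n)) ^ r) ^ s * k ∈ B := by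
      intro s
      induction s with
      | zero => intro k hk; simpa using hk
      | succ s ih =>
        intro k hk
        have := hP1 _ (ih k hk)
        rwa [← mul_assoc, ← pow_succ'] at this
    refine ⟨hP1, ?_, ?_⟩
    · rintro k hk k' hk' ⟨t, rfl⟩
      rcases Nat.eq_zero_or_pos (t % r) with h0 | hpos
      · refine ⟨t / r, ?_⟩
        rw [← pow_mul, Nat.mul_div_cancel' (Nat.dvd_of_mod_eq_zero h0)]
      · exfalso
        have hmem : ((q : ZMod n)) ^ (r * (t / r)) * k ∈ B := by
          have := clos (t / r) k hk
          rwa [← pow_mul] at this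
        refine hP2 (t % r) hpos (Nat.mod_lt _ (by omega)) _ hk' _ hmem ?_
        rw [← mul_assoc, ← pow_add, Nat.mod_add_div]
    · intro k hk
      set d := orderOf ((q : ZMod (n / Nat.gcd n (ZMod.val k)))) with hd
      have hdpos : 0 < d := hlp_ord_pos hcop k
      by_contra hnd
      have hpos : 0 < d % r := by
        exact Nat.pos_of_ne_zero (fun h => hnd (Nat.dvd_of_mod_eq_zero h))
      have hmem : ((q : ZMod n)) ^ (r * (d / r)) * k ∈ B := by
        have := clos (d / r) k hk
        rwa [← pow_mul] at this
      refine hP2 (d % r) hpos (Nat.mod_lt _ (by omega)) k hk _ hmem ?_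
      rw [← mul_assoc, ← pow_add, show d % r + r * (d / r) = d from Nat.mod_add_div d r]
      exact ((hlp_key hcop k d).mpr dvd_rfl).symm
  · rintro ⟨h1, h2, h3⟩
    refine ⟨e1.mpr h1, fun i hi hir => (e2 i).mpr ?_⟩
    rintro k hk k' hk' heq
    obtain ⟨s, hs⟩ := h2 k' hk' k hk ⟨i, heq⟩
    rw [← pow_mul] at hs
    have hd := h3 k' hk'
    have h4 : ((q : ZMod n)) ^ i * k' = ((q : ZMod n)) ^ (r * s) * k' := heq.symm.trans hs
    rcases le_total i (r * s) with hle | hle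
    · have hc : ((q : ZMod n)) ^ (r * s - i) * k' = k' := by
        have hx : ((q : ZMod n)) ^ i * (((q : ZMod n)) ^ (r * s - i) * k') =
            ((q : ZMod n)) ^ i * k' := by
          rw [← mul_assoc, ← pow_add, show i + (r * s - i) = r * s from by omega]
          exact h4.symm
        exact (huipow i).mul_left_cancel hx
      have hdd := (hlp_key hcop k' (r * s - i)).mp hc
      have h5 : r ∣ r * s - i := dvd_trans hd hdd
      have h6 : r ∣ r * s := dvd_mul_right r s
      have h7 := Nat.dvd_sub h6 h5
      rw [show r * s - (r * s - i) = i from by omega] at h7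
      exact absurd (Nat.le_of_dvd hi h7) (by omega)
    · have hc : ((q : ZMod n)) ^ (i - r * s) * k' = k' := by
        have hx : ((q : ZMod n)) ^ (r * s) * (((q : ZMod n)) ^ (i - r * s) * k') =
            ((q : ZMod n)) ^ (r * s) * k' := by
          rw [← mul_assoc, ← pow_add, show r * s + (i - r * s) = i from by omega]
          exact h4
        exact (huipow (r * s)).mul_left_cancel hx
      have hdd := (hlp_key hcop k' (i - r * s)).mp hc
      have h5 : r ∣ i - r * s := dvd_trans hd hdd
      have h6 : r ∣ r * s := dvd_mul_right r s
      have h7 := Nat.dvd_add h5 h6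
      rw [show i - r * s + r * s = i from by omega] at h7
      exact absurd (Nat.le_of_dvd hi h7) (by omega)
end

section
/- There exists a nonempty subset B ⊆ Z/nZ such that g_B has coefficients in F_{q^r} and is Galois coprime (equivalently, a proper Galois supplemented cyclic code of length n over F_{q^r} exists) if and only if r divides the multiplicative order of q modulo n. -/
open Polynomial

lemma polyGal_coeff {L : Type*} [Field L] {q : ℕ} (hq : 0 < q) (i : ℕ) (g : Polynomial L)
    (j : ℕ) : (polyGal q i g).coeff j = (g.coeff j) ^ (q ^ i) := by
  unfold polyGal
  rw [finset_sum_coeff]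
  simp only [coeff_C_mul, coeff_X_pow, mul_ite, mul_one, mul_zero]
  rw [Finset.sum_ite_eq]
  by_cases h : j ∈ g.support
  · simp [h]
  · simp only [h, if_false]
    rw [Polynomial.notMem_support_iff.mp h, zero_pow (by positivity)]

lemma polyGal_prod {L : Type*} [Field L] {p : ℕ} [CharP L p] (hp : p.Prime) (e : ℕ)
    {q : ℕ} (hq : q = p ^ e) (i : ℕ) {ι : Type*} (s : Finset ι) (f : ι → L) :
    polyGal q i (∏ k ∈ s, (X - C (f k))) = ∏ k ∈ s, (X - C ((f k) ^ (q ^ i))) := by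
  haveI := Fact.mk hp
  have h0 : 0 < q := hq ▸ pow_pos hp.pos e
  have key : ∀ x : L, x ^ (q ^ i) = iterateFrobenius L p (e * i) x := by
    intro x; rw [iterateFrobenius_def, hq, ← pow_mul]
  ext j
  rw [polyGal_coeff h0, key, ← Polynomial.coeff_map]
  congr 1
  rw [Polynomial.map_prod]
  refine Finset.prod_congr rfl fun k _ => ?_
  rw [Polynomial.map_sub, Polynomial.map_X, Polynomial.map_C, ← key]

/-- there exists a nonempty `B ⊆ ℤ/nℤ` such that `g_B` has coefficients in
`F_{q^r}` and is Galois coprime (equivalently, a proper Galois supplemented cyclic code of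
length `n` over `F_{q^r}` exists) iff `r` divides the multiplicative order of `q` mod `n`.
Here `ζ` is a primitive `n`-th root of unity in the splitting field `L` of `x^n − 1` over
`F_{q^r}`; membership of a coefficient `c` in `F_{q^r}` reads `c^(q^r) = c`, and the
non-trivial elements of `Gal(F_{q^r}/F_q)` act as `x ↦ x^(q^i)`, `1 ≤ i < r`. -/
theorem stmt11 (p e q r n : ℕ) (hp : p.Prime) (he : 0 < e) (hq : q = p ^ e)
    (hr : 1 < r) [NeZero n] (hcop : Nat.Coprime n q)
    (L : Type*) [Field L] [Fintype L] [CharP L p]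
    (ζ : L) (hζ : IsPrimitiveRoot ζ n) :
    (∃ B : Finset (ZMod n), B.Nonempty ∧
        (∀ j : ℕ, ((gB ζ B).coeff j) ^ (q ^ r) = (gB ζ B).coeff j) ∧
        (∀ i : ℕ, 0 < i → i < r → IsCoprime (gB ζ B) (polyGal q i (gB ζ B)))) ↔
      r ∣ orderOf ((q : ZMod n)) := by
  haveI := Fact.mk hp
  have hq0 : 0 < q := hq ▸ pow_pos hp.pos e
  have hu : IsUnit ((q : ZMod n)) := (ZMod.isUnit_iff_coprime q n).mpr hcop.symm
  set u : (ZMod n)ˣ := hu.unit with hudef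
  have huc : (u : ZMod n) = (q : ZMod n) := hu.unit_spec
  set m : ℕ := orderOf ((q : ZMod n)) with hm
  have hmu : m = orderOf u := by rw [hm, ← huc, orderOf_units]
  have hm0 : 0 < m := by rw [hmu]; exact orderOf_pos u
  set F : ZMod n → L := fun k => ζ ^ (ZMod.val k) with hFdef
  have hits : orderOf ζ = n := (hζ.eq_orderOf).symm
  have hpowmod : ∀ a b : ℕ, a ≡ b [MOD n] → ζ ^ a = ζ ^ b := by
    intro a b hab
    have h1 : a % n = b % n := hab
    calc ζ ^ a = ζ ^ (a % orderOf ζ) := (pow_mod_orderOf ζ a).symm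
      _ = ζ ^ (b % orderOf ζ) := by rw [hits, h1]
      _ = ζ ^ b := pow_mod_orderOf ζ b
  have hFinj : Function.Injective F := by
    intro k l hkl
    exact ZMod.val_injective n (hζ.pow_inj (ZMod.val_lt k) (ZMod.val_lt l) hkl)
  have hFcast : ∀ a : ℕ, F ((a : ZMod n)) = ζ ^ a := by
    intro a
    show ζ ^ (ZMod.val ((a : ZMod n))) = ζ ^ a
    rw [ZMod.val_natCast]
    exact hpowmod _ _ (Nat.mod_modEq a n)
  have hFmul : ∀ (s : ℕ) (k : ZMod n), (F k) ^ s = F ((s : ZMod n) * k) := by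
    intro s k
    have hk : ((ZMod.val k : ℕ) : ZMod n) = k := ZMod.natCast_rightInverse k
    have h1 : (F k) ^ s = ζ ^ (s * ZMod.val k) := by
      show (ζ ^ ZMod.val k) ^ s = _
      rw [← pow_mul, mul_comm]
    have h2 : (s : ZMod n) * k = ((s * ZMod.val k : ℕ) : ZMod n) := by
      rw [Nat.cast_mul, hk]
    rw [h1, h2, hFcast]
  have hgB : ∀ B : Finset (ZMod n), gB ζ B = ∏ k ∈ B, (X - C (F k)) := fun B => rfl
  have hpg : ∀ (i : ℕ) (B : Finset (ZMod n)),
      polyGal q i (gB ζ B) = ∏ k ∈ B, (X - C (F ((q : ZMod n) ^ i * k))) := by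
    intro i B
    rw [hgB, polyGal_prod hp e hq i B F]
    refine Finset.prod_congr rfl fun k _ => ?_
    rw [hFmul (q ^ i) k, Nat.cast_pow]
  have hcoefiff : ∀ B : Finset (ZMod n),
      (∀ j : ℕ, ((gB ζ B).coeff j) ^ (q ^ r) = (gB ζ B).coeff j) ↔
        polyGal q r (gB ζ B) = gB ζ B := by
    intro B
    constructor
    · intro h; ext j; rw [polyGal_coeff hq0, h]
    · intro h j
      rw [← polyGal_coeff hq0 r (gB ζ B) j, h]
  have hroot : ∀ (P Q : Polynomial L) (a : L),
      IsCoprime P Q → P.eval a = 0 → Q.eval a = 0 → False := by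
    rintro P Q a ⟨x, y, hxy⟩ hP hQ
    have := congrArg (Polynomial.eval a) hxy
    simp [hP, hQ] at this
  have hevalprod : ∀ (B : Finset (ZMod n)) (G : ZMod n → L) (a : L),
      (∃ k ∈ B, G k = a) → Polynomial.eval a (∏ k ∈ B, (X - C (G k))) = 0 := by
    rintro B G a ⟨k, hk, hG⟩
    rw [Polynomial.eval_prod]
    apply Finset.prod_eq_zero hk
    simp [hG]
  have hunitpow : ∀ s t : ℕ, s ≡ t [MOD m] → (q : ZMod n) ^ s = (q : ZMod n) ^ t := by
    intro s t hst
    have h1 : u ^ s = u ^ t := pow_eq_pow_iff_modEq.mpr (by rw [← hmu]; exact hst)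
    have h2 := congrArg Units.val h1
    rwa [Units.val_pow_eq_pow_val, Units.val_pow_eq_pow_val, huc] at h2
  have hunitpow' : ∀ s t : ℕ, (q : ZMod n) ^ s = (q : ZMod n) ^ t → s ≡ t [MOD m] := by
    intro s t hst
    have h1 : u ^ s = u ^ t := by
      apply Units.ext
      rwa [Units.val_pow_eq_pow_val, Units.val_pow_eq_pow_val, huc]
    have := pow_eq_pow_iff_modEq.mp h1
    rwa [← hmu] at this
  constructor
  · rintro ⟨B, ⟨k0, hk0⟩, hcoef, hcopr⟩
    have heq : (∏ k ∈ B, (X - C (F ((q : ZMod n) ^ r * k)))) = ∏ k ∈ B, (X - C (F k)) := by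
      rw [← hpg r B, ← hgB B]
      exact (hcoefiff B).mp hcoef
    have hclos1 : ∀ k ∈ B, (q : ZMod n) ^ r * k ∈ B := by
      intro k hk
      have h0 : Polynomial.eval (F ((q : ZMod n) ^ r * k)) (∏ l ∈ B, (X - C (F l))) = 0 := by
        rw [← heq]
        exact hevalprod B _ _ ⟨k, hk, rfl⟩
      rw [Polynomial.eval_prod] at h0
      obtain ⟨l, hl, h⟩ := Finset.prod_eq_zero_iff.mp h0
      simp only [eval_sub, eval_X, eval_C] at h
      have hkl : (q : ZMod n) ^ r * k = l := hFinj (sub_eq_zero.mp h)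
      exact hkl ▸ hl
    have hclosN : ∀ (a : ℕ), ∀ k ∈ B, (q : ZMod n) ^ (r * a) * k ∈ B := by
      intro a
      induction a with
      | zero => intro k hk; simpa using hk
      | succ t ih =>
        intro k hk
        have hexp : r * (t + 1) = r + r * t := by ring
        rw [hexp, pow_add, mul_assoc]
        exact hclos1 _ (ih k hk)
    by_contra hnd
    set d : ℕ := Nat.gcd r m with hd
    have hdr : d ∣ r := Nat.gcd_dvd_left r m
    have hd0 : 0 < d := Nat.gcd_pos_of_pos_left m (by omega)
    have hdlt : d < r :=
      lt_of_le_of_ne (Nat.le_of_dvd (by omega) hdr)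
        (fun hh => hnd (hh ▸ Nat.gcd_dvd_right r m))
    obtain ⟨a, ha⟩ : ∃ a : ℕ, r * a ≡ d [MOD m] := by
      have hb := Nat.gcd_eq_gcd_ab r m
      set x := Nat.gcdA r m with hx
      refine ⟨((x % (m : ℤ))).toNat, ?_⟩
      have hmz : (0 : ℤ) < (m : ℤ) := by exact_mod_cast hm0
      have hx0 : 0 ≤ x % (m : ℤ) := Int.emod_nonneg x (ne_of_gt hmz)
      rw [← Int.natCast_modEq_iff]
      push_cast [Int.toNat_of_nonneg hx0]
      have h1 : (r : ℤ) * (x % (m : ℤ)) ≡ (r : ℤ) * x [ZMOD (m : ℤ)] :=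
        Int.ModEq.mul_left _ (Int.emod_emod_of_dvd x dvd_rfl)
      have h2 : (r : ℤ) * x ≡ (r : ℤ) * x + (m : ℤ) * Nat.gcdB r m [ZMOD (m : ℤ)] :=
        (Int.modEq_iff_dvd.mpr ⟨Nat.gcdB r m, by ring⟩)
      have h3 : (r : ℤ) * x + (m : ℤ) * Nat.gcdB r m = (d : ℤ) := by
        rw [hd]; push_cast [hb]; ring
      exact h1.trans (h3 ▸ h2)
    have hqd : (q : ZMod n) ^ (r * a) = (q : ZMod n) ^ d := hunitpow _ _ ha
    have hin1 : (q : ZMod n) ^ d * k0 ∈ B := by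
      rw [← hqd]; exact hclosN a k0 hk0
    have hc := hcopr d hd0 hdlt
    refine hroot _ _ (F ((q : ZMod n) ^ d * k0)) hc ?_ ?_
    · rw [hgB]; exact hevalprod B F _ ⟨_, hin1, rfl⟩
    · rw [hpg d B]; exact hevalprod B _ _ ⟨k0, hk0, rfl⟩
  · intro hrm
    set B : Finset (ZMod n) := (Finset.range m).image (fun j => ((q : ZMod n)) ^ (r * j))
      with hBdef
    have hmem : ∀ x : ZMod n, x ∈ B ↔ ∃ j < m, (q : ZMod n) ^ (r * j) = x := by
      intro x; simp [hBdef]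
    have hstep : ∀ x ∈ B, (q : ZMod n) ^ r * x ∈ B := by
      intro x hx
      obtain ⟨j, hj, rfl⟩ := (hmem x).mp hx
      refine (hmem _).mpr ⟨(j + 1) % m, Nat.mod_lt _ hm0, ?_⟩
      have h5 : (q : ZMod n) ^ (r * ((j + 1) % m)) = (q : ZMod n) ^ (r * (j + 1)) :=
        hunitpow _ _ (Nat.ModEq.mul_left r (Nat.mod_modEq (j + 1) m))
      rw [h5, Nat.mul_succ, pow_add, mul_comm]
    refine ⟨B, ⟨1, (hmem 1).mpr ⟨0, hm0, by simp⟩⟩, ?_, ?_⟩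
    · rw [hcoefiff B, hpg r B, hgB B]
      have hinj : Function.Injective (fun k : ZMod n => (q : ZMod n) ^ r * k) :=
        (hu.pow r).mul_right_injective
      have himg : B.image (fun k => (q : ZMod n) ^ r * k) = B := by
        apply Finset.eq_of_subset_of_card_le
        · intro x hx
          obtain ⟨k, hk, rfl⟩ := Finset.mem_image.mp hx
          exact hstep k hk
        · exact le_of_eq (Finset.card_image_of_injective B hinj).symm
      conv_rhs => rw [← himg]
      rw [Finset.prod_image (fun a _ b _ h => hinj h)]
    · intro i hi0 hir
      rw [hpg i B, hgB B]
      apply IsCoprime.prod_left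
      intro k hk
      apply IsCoprime.prod_right
      intro l hl
      apply Polynomial.isCoprime_X_sub_C_of_isUnit_sub
      rw [isUnit_iff_ne_zero, Ne, sub_eq_zero]
      intro hFeq
      have hkl : k = (q : ZMod n) ^ i * l := hFinj hFeq
      obtain ⟨jk, hjk, rfl⟩ := (hmem k).mp hk
      obtain ⟨jl, hjl, rfl⟩ := (hmem l).mp hl
      rw [← pow_add] at hkl
      have hmod : r * jk ≡ i + r * jl [MOD m] := hunitpow' _ _ hkl
      have hmod' : r * jk ≡ i + r * jl [MOD r] := hmod.of_dvd hrm
      have h6 : (r * jk) % r = (i + r * jl) % r := hmod'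
      rw [Nat.mul_mod_right, Nat.add_mul_mod_self_left, Nat.mod_eq_of_lt hir] at h6
      exact hi0.ne' h6.symm
end

section
/- Suppose r divides the multiplicative order of q modulo n, and let B ≤ (Z/nZ)^× be a subgroup such that B ∩ G = H, where G = ⟨q⟩ and H = ⟨q^r⟩ in (Z/nZ)^×. Then g_B ∈ F_{q^r}[x] is Galois coprime; in particular, when r = 2, n is an odd prime and q is a quadratic non-residue modulo n, taking B to be the group of quadratic residues modulo n shows that the quadratic-residue code over F_{q^2} of length n is Galois supplemented. -/
open Polynomial

set_option linter.unusedSectionVars false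
section Aux

variable {L : Type*} [Field L] {n : ℕ} [NeZero n]

lemma zeta_pow_mod (ζ : L) (hζ : IsPrimitiveRoot ζ n) (i : ℕ) : ζ ^ (i % n) = ζ ^ i := by
  conv_rhs => rw [← Nat.mod_add_div i n]
  rw [pow_add, pow_mul, hζ.pow_eq_one, one_pow, mul_one]

lemma polyGal_eq_map (q i : ℕ) (φ : L →+* L) (hφ : ∀ x, φ x = x ^ q ^ i) (g : L[X]) :
    polyGal q i g = g.map φ := by
  conv_rhs => rw [g.as_sum_support_C_mul_X_pow]
  unfold polyGal
  rw [Polynomial.map_sum]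
  refine Finset.sum_congr rfl fun j _ => ?_
  rw [Polynomial.map_mul, Polynomial.map_pow, map_C, map_X, hφ]

lemma mul_right_inj_of_isUnit {c : ZMod n} (hc : IsUnit c) :
    Function.Injective (fun k : ZMod n => k * c) := by
  obtain ⟨v, rfl⟩ := hc
  intro a b h
  have := congrArg (fun x => x * (↑v⁻¹ : ZMod n)) h
  simpa [mul_assoc, ← Units.val_mul] using this

lemma gB_map (ζ : L) (hζ : IsPrimitiveRoot ζ n) (Bs : Finset (ZMod n)) (m : ℕ)
    (hc : IsUnit ((m : ℕ) : ZMod n)) (φ : L →+* L) (hφ : ∀ x, φ x = x ^ m) :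
    (gB ζ Bs).map φ = gB ζ (Bs.image (fun k => k * ((m : ℕ) : ZMod n))) := by
  unfold gB
  rw [Polynomial.map_prod,
    Finset.prod_image (fun x _ y _ h => mul_right_inj_of_isUnit hc h)]
  refine Finset.prod_congr rfl fun k _ => ?_
  rw [Polynomial.map_sub, map_X, map_C, hφ]
  congr 1
  rw [ZMod.val_mul, ZMod.val_natCast, zeta_pow_mod ζ hζ, mul_comm (ZMod.val k), pow_mul,
    zeta_pow_mod ζ hζ, ← pow_mul, mul_comm (ZMod.val k) m, pow_mul]

lemma coreFix (ζ : L) (hζ : IsPrimitiveRoot ζ n) (Bs : Finset (ZMod n)) (m : ℕ)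
    (hc : IsUnit ((m : ℕ) : ZMod n)) (φ : L →+* L) (hφ : ∀ x, φ x = x ^ m)
    (him : Bs.image (fun k => k * ((m : ℕ) : ZMod n)) = Bs) :
    ∀ j : ℕ, ((gB ζ Bs).coeff j) ^ m = (gB ζ Bs).coeff j := by
  intro j
  have h := gB_map ζ hζ Bs m hc φ hφ
  rw [him] at h
  have := congrArg (fun g : L[X] => g.coeff j) h
  simpa [Polynomial.coeff_map, hφ] using this

lemma coreCop (ζ : L) (hζ : IsPrimitiveRoot ζ n) (Bs : Finset (ZMod n)) (q i : ℕ)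
    (hc : IsUnit ((q ^ i : ℕ) : ZMod n)) (φ : L →+* L) (hφ : ∀ x, φ x = x ^ q ^ i)
    (hdisj : Disjoint Bs (Bs.image (fun k => k * ((q ^ i : ℕ) : ZMod n)))) :
    IsCoprime (gB ζ Bs) (polyGal q i (gB ζ Bs)) := by
  rw [polyGal_eq_map q i φ hφ, gB_map ζ hζ Bs (q ^ i) hc φ hφ]
  unfold gB
  refine IsCoprime.prod_left fun k hk => IsCoprime.prod_right fun k' hk' => ?_
  refine isCoprime_X_sub_C_of_isUnit_sub (isUnit_iff_ne_zero.mpr (sub_ne_zero.mpr ?_))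
  intro h
  have hkk : k = k' := ZMod.val_injective n (hζ.pow_inj (ZMod.val_lt k) (ZMod.val_lt k') h)
  subst hkk
  exact Finset.disjoint_left.mp hdisj hk hk'

end Aux

theorem bridge (p e q r : ℕ) {n : ℕ} (hp : p.Prime) (hq : q = p ^ e) [NeZero n]
    (hcop : Nat.Coprime q n) {L : Type*} [Field L] [CharP L p]
    (ζ : L) (hζ : IsPrimitiveRoot ζ n)
    (B : Subgroup (ZMod n)ˣ) (Bs : Finset (ZMod n))
    (hBs : ∀ k : ZMod n, k ∈ Bs ↔ ∃ u ∈ B, (u : ZMod n) = k)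
    (hur : (ZMod.unitOfCoprime q hcop) ^ r ∈ B)
    (hui : ∀ i : ℕ, 0 < i → i < r → (ZMod.unitOfCoprime q hcop) ^ i ∉ B) :
    (∀ j : ℕ, ((gB ζ Bs).coeff j) ^ (q ^ r) = (gB ζ Bs).coeff j) ∧
      (∀ i : ℕ, 0 < i → i < r → IsCoprime (gB ζ Bs) (polyGal q i (gB ζ Bs))) := by
  haveI := Fact.mk hp
  haveI : ExpChar L p := ExpChar.prime hp
  set u := ZMod.unitOfCoprime q hcop with hu
  have hqu : ((q : ℕ) : ZMod n) = ↑u := (ZMod.coe_unitOfCoprime q hcop).symm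
  have hcast : ∀ m : ℕ, ((q ^ m : ℕ) : ZMod n) = ↑(u ^ m) := by
    intro m
    rw [Nat.cast_pow, Units.val_pow_eq_pow_val, hqu]
  have hunit : ∀ m : ℕ, IsUnit ((q ^ m : ℕ) : ZMod n) := fun m => by
    rw [hcast]; exact (u ^ m).isUnit
  have hφ : ∀ i : ℕ, ∀ x : L, iterateFrobenius L p (e * i) x = x ^ q ^ i := by
    intro i x; rw [iterateFrobenius_def, hq, ← pow_mul]
  constructor
  · have him : Bs.image (fun k => k * ((q ^ r : ℕ) : ZMod n)) = Bs := by
      apply Finset.eq_of_subset_of_card_le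
      · intro k hk
        obtain ⟨k', hk', rfl⟩ := Finset.mem_image.mp hk
        obtain ⟨b, hb, rfl⟩ := (hBs k').mp hk'
        refine (hBs _).mpr ⟨b * u ^ r, B.mul_mem hb hur, ?_⟩
        rw [Units.val_mul, hcast]
      · rw [Finset.card_image_of_injective _ (mul_right_inj_of_isUnit (hunit r))]
    exact coreFix ζ hζ Bs (q ^ r) (hunit r) (iterateFrobenius L p (e * r)) (hφ r) him
  · intro i hi0 hir
    have hdisj : Disjoint Bs (Bs.image (fun k => k * ((q ^ i : ℕ) : ZMod n))) := by
      rw [Finset.disjoint_left]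
      intro k hk hk'
      obtain ⟨k2, hk2, hke⟩ := Finset.mem_image.mp hk'
      obtain ⟨b1, hb1, hb1e⟩ := (hBs k).mp hk
      obtain ⟨b2, hb2, hb2e⟩ := (hBs k2).mp hk2
      have hbe : b1 = b2 * u ^ i := by
        apply Units.ext
        rw [Units.val_mul, hb1e, hb2e, ← hcast]
        exact hke.symm
      have hmem : u ^ i ∈ B := by
        have h2 : u ^ i = b2⁻¹ * b1 := by rw [hbe]; group
        rw [h2]; exact B.mul_mem (B.inv_mem hb2) hb1
      exact hui i hi0 hir hmem
    exact coreCop ζ hζ Bs q i (hunit i) (iterateFrobenius L p (e * i)) (hφ i) hdisj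

/-- if `r ∣ ord(q mod n)` and `B ≤ (ℤ/nℤ)ˣ` is a subgroup with `B ∩ G = H`,
where `G = ⟨q⟩` and `H = ⟨q^r⟩`, then `g_B ∈ F_{q^r}[x]` is Galois coprime; in particular
(when `r = 2`, `n` an odd prime and `q` a quadratic non-residue mod `n`) taking `B` to be
the group of quadratic residues mod `n` shows the quadratic-residue code over `F_{q^2}` of
length `n` is Galois supplemented.  Here `ζ` is a primitive `n`-th root of unity in the
splitting field `L` of `x^n − 1` over `F_{q^r}`, membership of a coefficient `c` in
`F_{q^r}` reads `c^(q^r) = c`, and the non-trivial elements of `Gal(F_{q^r}/F_q)` act as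
`x ↦ x^(q^i)`, `1 ≤ i < r`. -/
theorem stmt12 (p e q r n : ℕ) (hp : p.Prime) (he : 0 < e) (hq : q = p ^ e)
    (hr : 1 < r) [NeZero n] (hcop : Nat.Coprime q n)
    (L : Type*) [Field L] [Fintype L] [CharP L p]
    (ζ : L) (hζ : IsPrimitiveRoot ζ n)
    (hord : r ∣ orderOf ((q : ZMod n)))
    (B : Subgroup (ZMod n)ˣ)
    (hBG : B ⊓ Subgroup.zpowers (ZMod.unitOfCoprime q hcop) =
      Subgroup.zpowers ((ZMod.unitOfCoprime q hcop) ^ r))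
    (Bs : Finset (ZMod n)) (hBs : ∀ k : ZMod n, k ∈ Bs ↔ ∃ u ∈ B, (u : ZMod n) = k) :
    ((∀ j : ℕ, ((gB ζ Bs).coeff j) ^ (q ^ r) = (gB ζ Bs).coeff j) ∧
      (∀ i : ℕ, 0 < i → i < r → IsCoprime (gB ζ Bs) (polyGal q i (gB ζ Bs)))) ∧
    (∀ QR : Finset (ZMod n), r = 2 → n.Prime → Odd n → ¬ IsSquare ((q : ZMod n)) →
      (∀ k : ZMod n, k ∈ QR ↔ k ≠ 0 ∧ IsSquare k) →
      ((∀ j : ℕ, ((gB ζ QR).coeff j) ^ (q ^ r) = (gB ζ QR).coeff j) ∧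
        (∀ i : ℕ, 0 < i → i < r → IsCoprime (gB ζ QR) (polyGal q i (gB ζ QR))))) := by
  set u := ZMod.unitOfCoprime q hcop with hu
  have hque : orderOf ((q : ℕ) : ZMod n) = orderOf u := by
    rw [← ZMod.coe_unitOfCoprime q hcop]; exact orderOf_units
  have hordu : r ∣ orderOf u := hque ▸ hord
  have hui : ∀ i : ℕ, 0 < i → i < r → u ^ i ∉ B := by
    intro i hi0 hir hmem
    have hmem2 : u ^ i ∈ B ⊓ Subgroup.zpowers u :=
      ⟨hmem, ⟨(i : ℤ), by simp⟩⟩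
    rw [hBG] at hmem2
    obtain ⟨m, hm⟩ := Subgroup.mem_zpowers_iff.mp hmem2
    have hm' : u ^ ((r : ℤ) * m) = u ^ (i : ℤ) := by
      rw [zpow_mul, zpow_natCast, hm, zpow_natCast]
    have h1 : u ^ ((r : ℤ) * m - (i : ℤ)) = 1 := by
      rw [zpow_sub, hm', mul_inv_cancel]
    have h2 : ((orderOf u : ℤ)) ∣ ((r : ℤ) * m - i) := orderOf_dvd_iff_zpow_eq_one.mpr h1
    have h3 : (r : ℤ) ∣ ((r : ℤ) * m - i) :=
      dvd_trans (Int.natCast_dvd_natCast.mpr hordu) h2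
    have h4 : (r : ℤ) ∣ (i : ℤ) := by
      have h5 : (r : ℤ) ∣ (r : ℤ) * m := Dvd.intro m rfl
      have h6 := dvd_sub h5 h3
      simpa using h6
    have h7 : r ∣ i := Int.natCast_dvd_natCast.mp h4
    exact absurd (Nat.le_of_dvd hi0 h7) (by omega)
  have hur : u ^ r ∈ B := by
    have h := Subgroup.mem_zpowers (u ^ r)
    rw [← hBG] at h; exact h.1
  refine ⟨bridge p e q r hp hq hcop ζ hζ B Bs hBs hur hui, ?_⟩
  intro QR hr2 hnp hodd hsq hQR
  subst hr2
  haveI := Fact.mk hnp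
  set B' : Subgroup (ZMod n)ˣ := (powMonoidHom 2 : (ZMod n)ˣ →* (ZMod n)ˣ).range with hB'
  have hQR' : ∀ k : ZMod n, k ∈ QR ↔ ∃ v ∈ B', (v : ZMod n) = k := by
    intro k; rw [hQR]
    constructor
    · rintro ⟨hk0, c, rfl⟩
      have hc : c ≠ 0 := by rintro rfl; simp at hk0
      obtain ⟨w, rfl⟩ := isUnit_iff_ne_zero.mpr hc
      exact ⟨w ^ 2, ⟨w, rfl⟩, by rw [Units.val_pow_eq_pow_val]; ring⟩
    · rintro ⟨v, ⟨w, rfl⟩, rfl⟩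
      refine ⟨Units.ne_zero _, ↑w, ?_⟩
      rw [powMonoidHom_apply, Units.val_pow_eq_pow_val]; ring
  have hur2 : u ^ 2 ∈ B' := ⟨u, rfl⟩
  have hui2 : ∀ i : ℕ, 0 < i → i < 2 → u ^ i ∉ B' := by
    intro i hi0 hi2 hmem
    interval_cases i
    rw [pow_one] at hmem
    obtain ⟨w, hw⟩ := hmem
    apply hsq
    have hc : ((q : ℕ) : ZMod n) = ↑u := (ZMod.coe_unitOfCoprime q hcop).symm
    rw [hc, ← hw, powMonoidHom_apply, Units.val_pow_eq_pow_val]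
    exact ⟨↑w, by ring⟩
  exact bridge p e q 2 hp hq hcop ζ hζ B' QR hQR' hur2 hui2
end

section
/- Let n be odd, λ ∈ F_4 ∖ F_2, ζ a primitive n-th root of unity in the splitting field of x^n − 1 over F_4, and B ⊆ Z/nZ a complete 2²-block, i.e., g_B ∈ F_4[x] is Galois coprime and the disjoint union B ⊔ 2B equals Z/nZ ∖ {0}. Define B* = {1 ≤ j ≤ n−1 : Σ_{i ∈ B} ζ^{−ij} = λ}. Then B* is also a complete 2²-block, and B** = −B if n ≡ 1 (mod 4), while B** = −2B if n ≡ 3 (mod 4). -/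
open Polynomial

/-- `B ⊆ ℤ/nℤ` is a complete `2²`-block: `g_B` has coefficients in `F_4` (the roots of
`x^4 = x`), `g_B` is Galois coprime (coprime to `g_B^σ`, the coefficientwise square), and
`B ⊔ 2B = ℤ/nℤ ∖ {0}` (a disjoint union). -/
def IsComplete2Block {L : Type*} [Field L] {n : ℕ} [NeZero n] (ζ : L)
    (B : Finset (ZMod n)) : Prop :=
  (∀ j : ℕ, ((gB ζ B).coeff j) ^ (2 ^ 2) = (gB ζ B).coeff j) ∧
  IsCoprime (gB ζ B) (polyGal 2 1 (gB ζ B)) ∧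
  Disjoint B (Finset.image (fun k => 2 * k) B) ∧
  B ∪ Finset.image (fun k => 2 * k) B = Finset.univ \ {0}

/-- `B* = {1 ≤ j ≤ n−1 : Σ_{i ∈ B} ζ^(−ij) = λ}`. -/
noncomputable def blockStar {L : Type*} [Field L] [DecidableEq L] {n : ℕ} [NeZero n]
    (ζ lam : L) (B : Finset (ZMod n)) : Finset (ZMod n) :=
  Finset.univ.filter (fun j : ZMod n =>
    j ≠ 0 ∧ ∑ i ∈ B, (ζ ^ (ZMod.val (i * j)))⁻¹ = lam)


set_option linter.unusedSectionVars false

open Finset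


section Aux
variable {n : ℕ} [NeZero n] {L : Type*} [Field L] {ζ : L}

lemma e_mod (hζ : IsPrimitiveRoot ζ n) (m : ℕ) : ζ ^ (m % n) = ζ ^ m :=
  (pow_eq_pow_mod m hζ.pow_eq_one).symm

lemma e_add (hζ : IsPrimitiveRoot ζ n) (a b : ZMod n) :
    ζ ^ (a + b).val = ζ ^ a.val * ζ ^ b.val := by
  rw [← pow_add, ZMod.val_add, e_mod hζ]

lemma e_natCast (hζ : IsPrimitiveRoot ζ n) (m : ℕ) : ζ ^ (ZMod.val (m : ZMod n)) = ζ ^ m := by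
  rw [ZMod.val_natCast, e_mod hζ]

lemma e_mul (hζ : IsPrimitiveRoot ζ n) (a b : ZMod n) :
    ζ ^ (a * b).val = (ζ ^ a.val) ^ b.val := by
  rw [← pow_mul, ZMod.val_mul, e_mod hζ]

lemma e_inv (hζ : IsPrimitiveRoot ζ n) (a : ZMod n) :
    (ζ ^ a.val)⁻¹ = ζ ^ (-a).val := by
  refine (inv_eq_of_mul_eq_one_right ?_)
  rw [← e_add hζ, add_neg_cancel, ZMod.val_zero, pow_zero]

lemma e_two_mul (hζ : IsPrimitiveRoot ζ n) (a : ZMod n) :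
    ζ ^ (2 * a).val = (ζ ^ a.val) ^ 2 := by
  have h2 : ((2 : ℕ) : ZMod n) = (2 : ZMod n) := by push_cast; ring
  rw [← h2, e_mul hζ, e_natCast hζ 2, ← pow_mul, ← pow_mul, mul_comm]

lemma e_inj (hζ : IsPrimitiveRoot ζ n) {a b : ZMod n} (h : ζ ^ a.val = ζ ^ b.val) : a = b := by
  have := hζ.pow_inj a.val_lt b.val_lt h
  exact ZMod.val_injective n this

set_option linter.unusedSectionVars false in
lemma sum_val {M : Type*} [AddCommMonoid M] (f : ℕ → M) :
    ∑ a : ZMod n, f a.val = ∑ k ∈ Finset.range n, f k := by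
  refine Finset.sum_nbij' (fun a => a.val) (fun k => (k : ZMod n)) ?_ ?_ ?_ ?_ ?_
  · intro a _; exact Finset.mem_range.2 a.val_lt
  · intro a _; exact Finset.mem_univ _
  · intro a _; exact ZMod.natCast_rightInverse a
  · intro k hk; exact ZMod.val_cast_of_lt (Finset.mem_range.1 hk)
  · intro a _; rfl

lemma sum_e (hζ : IsPrimitiveRoot ζ n) (c : ZMod n) :
    ∑ a : ZMod n, ζ ^ (a * c).val = if c = 0 then (n : L) else 0 := by
  have key : ∀ a : ZMod n, ζ ^ (a * c).val = (ζ ^ c.val) ^ a.val := by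
    intro a; rw [mul_comm, e_mul hζ]
  simp only [key]
  rw [_root_.sum_val (fun k => (ζ ^ c.val) ^ k)]
  by_cases hc : c = 0
  · simp [hc]
  · have hη : ζ ^ c.val ≠ 1 := by
      intro h
      have hdvd := (hζ.pow_eq_one_iff_dvd c.val).1 h
      have hlt := c.val_lt
      have hv : c.val = 0 := Nat.eq_zero_of_dvd_of_lt hdvd hlt
      exact hc ((ZMod.val_eq_zero c).1 hv)
    rw [geom_sum_eq hη]
    have : (ζ ^ c.val) ^ n = 1 := by
      rw [← pow_mul, mul_comm, pow_mul, hζ.pow_eq_one, one_pow]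
    rw [this, sub_self, zero_div]
    simp [hc]

end Aux

section Aux2
variable {n : ℕ} [NeZero n] {L : Type*} [Field L] {ζ : L}

lemma polyGal_eq_map_s15 [CharP L 2] (g : Polynomial L) :
    polyGal 2 1 g = g.map (frobenius L 2) := by
  conv_rhs => rw [g.as_sum_support]
  rw [Polynomial.map_sum]
  unfold polyGal
  refine Finset.sum_congr rfl fun j _ => ?_
  rw [Polynomial.map_monomial, frobenius_def, ← Polynomial.C_mul_X_pow_eq_monomial]
  norm_num

lemma two_mul_injective (hodd : Odd n) : Function.Injective (fun k : ZMod n => 2 * k) := by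
  have h2 : IsUnit (2 : ZMod n) := by
    have := (ZMod.isUnit_iff_coprime 2 n).2 hodd.coprime_two_left
    simpa using this
  intro a b hab
  simpa using h2.mul_left_cancel hab

lemma map_gB (hζ : IsPrimitiveRoot ζ n) (hodd : Odd n) [CharP L 2] (C : Finset (ZMod n)) :
    (gB ζ C).map (frobenius L 2) = gB ζ (C.image (fun k => 2 * k)) := by
  unfold gB
  rw [Polynomial.map_prod, Finset.prod_image (fun a _ b _ h => two_mul_injective hodd h)]
  refine Finset.prod_congr rfl fun k _ => ?_
  rw [Polynomial.map_sub, Polynomial.map_X, Polynomial.map_C, frobenius_def,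
    e_two_mul hζ]

lemma gal_gB (hζ : IsPrimitiveRoot ζ n) (hodd : Odd n) [CharP L 2] (C : Finset (ZMod n)) :
    polyGal 2 1 (gB ζ C) = gB ζ (C.image (fun k => 2 * k)) := by
  rw [polyGal_eq_map_s15, map_gB hζ hodd]

lemma coprime_gB (hζ : IsPrimitiveRoot ζ n) {C D : Finset (ZMod n)} (h : Disjoint C D) :
    IsCoprime (gB ζ C) (gB ζ D) := by
  unfold gB
  refine IsCoprime.prod_left fun a ha => IsCoprime.prod_right fun b hb => ?_
  refine Polynomial.isCoprime_X_sub_C_of_isUnit_sub (IsUnit.mk0 _ (sub_ne_zero.2 ?_))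
  intro hab
  exact (Finset.disjoint_left.1 h ha) (e_inj hζ hab ▸ hb)

end Aux2

noncomputable def sB {L : Type*} [Field L] {n : ℕ} [NeZero n] (ζ : L) (B : Finset (ZMod n))
    (j : ZMod n) : L :=
  ∑ i ∈ B, (ζ ^ (ZMod.val (i * j)))⁻¹

section Aux3
variable {n : ℕ} [NeZero n] {L : Type*} [Field L] [DecidableEq L] {ζ lam : L}

lemma mem_blockStar {B : Finset (ZMod n)} {j : ZMod n} :
    j ∈ blockStar ζ lam B ↔ j ≠ 0 ∧ sB ζ B j = lam := by
  simp [blockStar, sB]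

lemma sB_two_mul [CharP L 2] (hζ : IsPrimitiveRoot ζ n) (B : Finset (ZMod n)) (j : ZMod n) :
    sB ζ B (2 * j) = (sB ζ B j) ^ 2 := by
  unfold sB
  rw [sum_pow_char]
  refine Finset.sum_congr rfl fun i _ => ?_
  rw [inv_pow, ← e_two_mul hζ]
  ring_nf

lemma sB_add_sB [CharP L 2] (hζ : IsPrimitiveRoot ζ n) (hodd : Odd n) {B : Finset (ZMod n)}
    (hd : Disjoint B (Finset.image (fun k => 2 * k) B))
    (hu : B ∪ Finset.image (fun k => 2 * k) B = Finset.univ \ {0})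
    {j : ZMod n} (hj : j ≠ 0) : sB ζ B j + sB ζ B (2 * j) = 1 := by
  have h2 : sB ζ B (2 * j) = ∑ i ∈ Finset.image (fun k => 2 * k) B, (ζ ^ (ZMod.val (i * j)))⁻¹ := by
    rw [Finset.sum_image (fun a _ b _ h => two_mul_injective hodd h)]
    refine Finset.sum_congr rfl fun i _ => ?_
    ring_nf
  rw [h2]
  unfold sB
  rw [← Finset.sum_union hd, hu]
  have huniv : ∑ i : ZMod n, (ζ ^ (ZMod.val (i * j)))⁻¹ = 0 := by
    have : ∀ i : ZMod n, (ζ ^ (ZMod.val (i * j)))⁻¹ = ζ ^ (ZMod.val (i * (-j))) := by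
      intro i
      rw [e_inv hζ]
      congr 1
      ring
    simp only [this]
    rw [sum_e hζ (-j)]
    simp [hj]
  have hsplit := Finset.sum_eq_sum_sdiff_singleton_add (Finset.mem_univ (0 : ZMod n))
      (fun i => (ζ ^ (ZMod.val (i * j)))⁻¹)
  rw [huniv] at hsplit
  have h0 : (ζ ^ (ZMod.val ((0 : ZMod n) * j)))⁻¹ = 1 := by
    rw [zero_mul, ZMod.val_zero, pow_zero, inv_one]
  rw [h0] at hsplit
  have hneg : ∑ i ∈ Finset.univ \ {0}, (ζ ^ (ZMod.val (i * j)))⁻¹ = -1 := by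
    linear_combination -hsplit
  rw [hneg, CharTwo.neg_eq]

lemma sB_vals [CharP L 2] (hζ : IsPrimitiveRoot ζ n) (hodd : Odd n)
    (hlam4 : lam ^ 4 = lam) (hlam2 : lam ^ 2 ≠ lam)
    {B : Finset (ZMod n)}
    (hd : Disjoint B (Finset.image (fun k => 2 * k) B))
    (hu : B ∪ Finset.image (fun k => 2 * k) B = Finset.univ \ {0})
    {j : ZMod n} (hj : j ≠ 0) : sB ζ B j = lam ∨ sB ζ B j = lam ^ 2 := by
  have h2 : (2 : L) = 0 := CharTwo.two_eq_zero
  have h0 : lam ≠ 0 := fun h => hlam2 (by simp [h])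
  have h3 : lam ^ 3 = 1 := by
    have hx : lam * lam ^ 3 = lam * 1 := by rw [mul_one]; linear_combination hlam4
    exact mul_left_cancel₀ h0 hx
  have h1 : lam ≠ 1 := fun h => hlam2 (by simp [h])
  have hfact : (lam - 1) * (lam ^ 2 + lam + 1) = 0 := by linear_combination h3
  have hquad : lam ^ 2 + lam + 1 = 0 := by
    rcases mul_eq_zero.1 hfact with h | h
    · exact absurd (sub_eq_zero.1 h) h1
    · exact h
  have hsum : lam + lam ^ 2 = 1 := by linear_combination hquad - h2
  have hx : sB ζ B j + (sB ζ B j) ^ 2 = 1 := by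
    rw [← sB_two_mul hζ]; exact sB_add_sB hζ hodd hd hu hj
  set x := sB ζ B j
  have hzero : (x - lam) * (x - lam ^ 2) = 0 := by
    linear_combination hx - x * hsum + h3 - (x - 1) * h2
  rcases mul_eq_zero.1 hzero with h | h
  · exact Or.inl (sub_eq_zero.1 h)
  · exact Or.inr (sub_eq_zero.1 h)

end Aux3
section Aux4
variable {n : ℕ} [NeZero n] {L : Type*} [Field L] [DecidableEq L] {ζ lam : L}

lemma mem_two_blockStar [CharP L 2] (hζ : IsPrimitiveRoot ζ n) (hodd : Odd n)
    (hlam4 : lam ^ 4 = lam) (hlam2 : lam ^ 2 ≠ lam)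
    {B : Finset (ZMod n)}
    (hd : Disjoint B (Finset.image (fun k => 2 * k) B))
    (hu : B ∪ Finset.image (fun k => 2 * k) B = Finset.univ \ {0})
    {j : ZMod n} :
    j ∈ Finset.image (fun k => 2 * k) (blockStar ζ lam B) ↔ j ≠ 0 ∧ sB ζ B j = lam ^ 2 := by
  constructor
  · rintro hj
    obtain ⟨k, hk, rfl⟩ := Finset.mem_image.1 hj
    obtain ⟨hk0, hks⟩ := mem_blockStar.1 hk
    refine ⟨?_, ?_⟩
    · intro h
      exact hk0 (two_mul_injective hodd (by simpa using h))
    · rw [sB_two_mul hζ, hks]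
  · rintro ⟨hj0, hjs⟩
    have h2u : IsUnit (2 : ZMod n) := by
      have := (ZMod.isUnit_iff_coprime 2 n).2 hodd.coprime_two_left
      simpa using this
    obtain ⟨u, hu2⟩ := h2u
    set k := (↑u⁻¹ : ZMod n) * j with hk
    have h2k : 2 * k = j := by
      rw [hk, ← mul_assoc, ← hu2, Units.mul_inv, one_mul]
    have hk0 : k ≠ 0 := fun h => hj0 (by rw [← h2k, h, mul_zero])
    have hsq : (sB ζ B k) ^ 2 = lam ^ 2 := by
      rw [← sB_two_mul hζ, h2k, hjs]
    have hkval := sB_vals hζ hodd hlam4 hlam2 hd hu hk0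
    rcases hkval with h | h
    · exact Finset.mem_image.2 ⟨k, mem_blockStar.2 ⟨hk0, h⟩, h2k⟩
    · exfalso
      rw [h] at hsq
      apply hlam2
      have : lam ^ 4 = lam ^ 2 := by rw [show (4:ℕ) = 2*2 by norm_num, pow_mul, hsq]
      rw [← this, hlam4]

lemma blockStar_disjoint [CharP L 2] (hζ : IsPrimitiveRoot ζ n) (hodd : Odd n)
    (hlam4 : lam ^ 4 = lam) (hlam2 : lam ^ 2 ≠ lam)
    {B : Finset (ZMod n)}
    (hd : Disjoint B (Finset.image (fun k => 2 * k) B))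
    (hu : B ∪ Finset.image (fun k => 2 * k) B = Finset.univ \ {0}) :
    Disjoint (blockStar ζ lam B) (Finset.image (fun k => 2 * k) (blockStar ζ lam B)) := by
  rw [Finset.disjoint_left]
  intro j hj hj2
  obtain ⟨_, h1⟩ := mem_blockStar.1 hj
  obtain ⟨_, h2⟩ := (mem_two_blockStar hζ hodd hlam4 hlam2 hd hu).1 hj2
  exact hlam2 (h2 ▸ h1 ▸ rfl)

lemma blockStar_union [CharP L 2] (hζ : IsPrimitiveRoot ζ n) (hodd : Odd n)
    (hlam4 : lam ^ 4 = lam) (hlam2 : lam ^ 2 ≠ lam)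
    {B : Finset (ZMod n)}
    (hd : Disjoint B (Finset.image (fun k => 2 * k) B))
    (hu : B ∪ Finset.image (fun k => 2 * k) B = Finset.univ \ {0}) :
    blockStar ζ lam B ∪ Finset.image (fun k => 2 * k) (blockStar ζ lam B)
      = Finset.univ \ {0} := by
  ext j
  rw [Finset.mem_union, mem_blockStar, mem_two_blockStar hζ hodd hlam4 hlam2 hd hu,
    Finset.mem_sdiff, Finset.mem_singleton]
  constructor
  · rintro (⟨h0, _⟩ | ⟨h0, _⟩) <;> exact ⟨Finset.mem_univ _, h0⟩
  · rintro ⟨_, h0⟩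
    rcases sB_vals hζ hodd hlam4 hlam2 hd hu h0 with h | h
    · exact Or.inl ⟨h0, h⟩
    · exact Or.inr ⟨h0, h⟩

lemma image_two_T (hodd : Odd n) :
    Finset.image (fun k : ZMod n => 2 * k) (Finset.univ \ {0}) = Finset.univ \ {0} := by
  have hinj := two_mul_injective (n := n) hodd
  have hbij : Function.Bijective (fun k : ZMod n => 2 * k) :=
    Finite.injective_iff_bijective.1 hinj
  rw [Finset.image_sdiff _ _ hinj, Finset.image_singleton, mul_zero,
    Finset.image_univ_of_surjective hbij.2]

lemma image_four (hodd : Odd n) {C : Finset (ZMod n)}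
    (hd : Disjoint C (Finset.image (fun k => 2 * k) C))
    (hu : C ∪ Finset.image (fun k => 2 * k) C = Finset.univ \ {0}) :
    Finset.image (fun k => 2 * k) (Finset.image (fun k : ZMod n => 2 * k) C) = C := by
  have hinj := two_mul_injective (n := n) hodd
  have d2 : Disjoint (Finset.image (fun k => 2 * k) C)
      (Finset.image (fun k => 2 * k) (Finset.image (fun k : ZMod n => 2 * k) C)) :=
    (Finset.disjoint_image hinj).2 hd
  have u2 : Finset.image (fun k => 2 * k) C
      ∪ Finset.image (fun k => 2 * k) (Finset.image (fun k : ZMod n => 2 * k) C)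
      = Finset.univ \ {0} := by
    rw [← Finset.image_union, hu, image_two_T hodd]
  calc Finset.image (fun k => 2 * k) (Finset.image (fun k : ZMod n => 2 * k) C)
      = (Finset.image (fun k => 2 * k) C
          ∪ Finset.image (fun k => 2 * k) (Finset.image (fun k : ZMod n => 2 * k) C))
          \ Finset.image (fun k => 2 * k) C := (Finset.union_sdiff_cancel_left d2).symm
    _ = (C ∪ Finset.image (fun k => 2 * k) C) \ Finset.image (fun k => 2 * k) C := by
          rw [u2, hu]
    _ = C := Finset.union_sdiff_cancel_right hd

end Aux4
section Aux5
variable {n : ℕ} [NeZero n] {L : Type*} [Field L] [DecidableEq L] {ζ lam : L}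

lemma lam_quad (hlam4 : lam ^ 4 = lam) (hlam2 : lam ^ 2 ≠ lam) :
    lam ^ 2 + lam + 1 = 0 := by
  have h0 : lam ≠ 0 := fun h => hlam2 (by simp [h])
  have h3 : lam ^ 3 = 1 := by
    have hx : lam * lam ^ 3 = lam * 1 := by rw [mul_one]; linear_combination hlam4
    exact mul_left_cancel₀ h0 hx
  have h1 : lam ≠ 1 := fun h => hlam2 (by simp [h])
  have hfact : (lam - 1) * (lam ^ 2 + lam + 1) = 0 := by linear_combination h3
  rcases mul_eq_zero.1 hfact with h | h
  · exact absurd (sub_eq_zero.1 h) h1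
  · exact h

lemma sum_T_inv [CharP L 2] (hζ : IsPrimitiveRoot ζ n) {k : ZMod n} (hk : k ≠ 0) :
    ∑ j ∈ Finset.univ \ {0}, (ζ ^ (ZMod.val (j * k)))⁻¹ = 1 := by
  have huniv : ∑ j : ZMod n, (ζ ^ (ZMod.val (j * k)))⁻¹ = 0 := by
    have he : ∀ j : ZMod n, (ζ ^ (ZMod.val (j * k)))⁻¹ = ζ ^ (ZMod.val (j * (-k))) := by
      intro j; rw [e_inv hζ]; congr 1; ring
    simp only [he]
    rw [sum_e hζ (-k)]
    simp [hk]
  have hsplit := Finset.sum_eq_sum_sdiff_singleton_add (Finset.mem_univ (0 : ZMod n))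
      (fun j => (ζ ^ (ZMod.val (j * k)))⁻¹)
  rw [huniv] at hsplit
  have h0 : (ζ ^ (ZMod.val ((0 : ZMod n) * k)))⁻¹ = 1 := by
    rw [zero_mul, ZMod.val_zero, pow_zero, inv_one]
  rw [h0] at hsplit
  have : ∑ j ∈ Finset.univ \ {0}, (ζ ^ (ZMod.val (j * k)))⁻¹ = -1 := by
    linear_combination -hsplit
  rw [this, CharTwo.neg_eq]

lemma sum_T_sB [CharP L 2] (hζ : IsPrimitiveRoot ζ n) (hodd : Odd n)
    (B : Finset (ZMod n)) {k : ZMod n} :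
    ∑ j ∈ Finset.univ \ {0}, sB ζ B j * (ζ ^ (ZMod.val (j * k)))⁻¹
      = (if -k ∈ B then (1 : L) else 0) + (B.card : L) := by
  have hn1 : ((n : L)) = 1 := natCast_eq_one_of_odd_of_two_eq_zero hodd CharTwo.two_eq_zero
  have huniv : ∑ j : ZMod n, sB ζ B j * (ζ ^ (ZMod.val (j * k)))⁻¹
      = (if -k ∈ B then (1 : L) else 0) := by
    unfold sB
    simp only [Finset.sum_mul]
    rw [Finset.sum_comm]
    have hterm : ∀ i j : ZMod n,
        (ζ ^ (ZMod.val (i * j)))⁻¹ * (ζ ^ (ZMod.val (j * k)))⁻¹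
          = ζ ^ (ZMod.val (j * (-(i + k)))) := by
      intro i j
      rw [e_inv hζ, e_inv hζ, ← e_add hζ]
      congr 1
      ring
    have hinner : ∀ i : ZMod n,
        ∑ j : ZMod n, (ζ ^ (ZMod.val (i * j)))⁻¹ * (ζ ^ (ZMod.val (j * k)))⁻¹
          = if i = -k then (1 : L) else 0 := by
      intro i
      simp only [hterm]
      rw [sum_e hζ (-(i + k))]
      by_cases hik : i = -k
      · simp [hik, hn1]
      · have : ¬(-(i + k) = 0) := by
          intro h
          exact hik (by linear_combination -h)
        rw [if_neg this, if_neg hik]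
    simp only [hinner]
    rw [Finset.sum_ite_eq' B (-k) (fun _ => (1 : L))]
  have hsplit := Finset.sum_eq_sum_sdiff_singleton_add (Finset.mem_univ (0 : ZMod n))
      (fun j => sB ζ B j * (ζ ^ (ZMod.val (j * k)))⁻¹)
  rw [huniv] at hsplit
  have h00 : sB ζ B 0 * (ζ ^ (ZMod.val ((0 : ZMod n) * k)))⁻¹ = (B.card : L) := by
    rw [zero_mul, ZMod.val_zero, pow_zero, inv_one, mul_one]
    unfold sB
    simp [ZMod.val_zero]
  rw [h00] at hsplit
  have h2 : (2 : L) = 0 := CharTwo.two_eq_zero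
  linear_combination -hsplit - (B.card : L) * h2

lemma sB_star_val [CharP L 2] (hζ : IsPrimitiveRoot ζ n) (hodd : Odd n)
    (hlam4 : lam ^ 4 = lam) (hlam2 : lam ^ 2 ≠ lam)
    {B : Finset (ZMod n)}
    (hd : Disjoint B (Finset.image (fun k => 2 * k) B))
    (hu : B ∪ Finset.image (fun k => 2 * k) B = Finset.univ \ {0})
    {k : ZMod n} (hk : k ≠ 0) :
    sB ζ (blockStar ζ lam B) k
      = (if -k ∈ B then (1 : L) else 0) + (B.card : L) + lam ^ 2 := by
  have h2 : (2 : L) = 0 := CharTwo.two_eq_zero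
  have hquad := lam_quad hlam4 hlam2
  have hsum : lam + lam ^ 2 = 1 := by linear_combination hquad - h2
  have key1 : ∑ j ∈ Finset.univ \ {0}, (sB ζ B j + lam ^ 2) * (ζ ^ (ZMod.val (j * k)))⁻¹
      = sB ζ (blockStar ζ lam B) k := by
    rw [← blockStar_union hζ hodd hlam4 hlam2 hd hu,
      Finset.sum_union (blockStar_disjoint hζ hodd hlam4 hlam2 hd hu)]
    have e1 : ∑ j ∈ blockStar ζ lam B, (sB ζ B j + lam ^ 2) * (ζ ^ (ZMod.val (j * k)))⁻¹
        = ∑ j ∈ blockStar ζ lam B, (ζ ^ (ZMod.val (j * k)))⁻¹ := by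
      refine Finset.sum_congr rfl fun j hj => ?_
      obtain ⟨_, hs⟩ := mem_blockStar.1 hj
      rw [hs, hsum, one_mul]
    have e2 : ∑ j ∈ Finset.image (fun k => 2 * k) (blockStar ζ lam B),
        (sB ζ B j + lam ^ 2) * (ζ ^ (ZMod.val (j * k)))⁻¹ = 0 := by
      refine Finset.sum_eq_zero fun j hj => ?_
      obtain ⟨_, hs⟩ := (mem_two_blockStar hζ hodd hlam4 hlam2 hd hu).1 hj
      rw [hs, CharTwo.add_self_eq_zero, zero_mul]
    rw [e1, e2, add_zero]
    rfl
  have key2 : ∑ j ∈ Finset.univ \ {0}, (sB ζ B j + lam ^ 2) * (ζ ^ (ZMod.val (j * k)))⁻¹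
      = (∑ j ∈ Finset.univ \ {0}, sB ζ B j * (ζ ^ (ZMod.val (j * k)))⁻¹)
        + lam ^ 2 * ∑ j ∈ Finset.univ \ {0}, (ζ ^ (ZMod.val (j * k)))⁻¹ := by
    rw [Finset.mul_sum, ← Finset.sum_add_distrib]
    refine Finset.sum_congr rfl fun j _ => ?_
    ring
  rw [← key1, key2, sum_T_sB hζ hodd B, sum_T_inv hζ hk, mul_one]

end Aux5

/-- for `n` odd, `λ ∈ F_4 ∖ F_2`, `ζ` a primitive `n`-th root of unity over
`F_4` and `B` a complete `2²`-block, the set `B*` is again a complete `2²`-block, and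
`B** = −B` if `n ≡ 1 (mod 4)` while `B** = −2B` if `n ≡ 3 (mod 4)`. -/
theorem stmt15 (n : ℕ) [NeZero n] (hodd : Odd n)
    (L : Type*) [Field L] [Fintype L] [DecidableEq L] [CharP L 2]
    (ζ : L) (hζ : IsPrimitiveRoot ζ n)
    (lam : L) (hlam4 : lam ^ 4 = lam) (hlam2 : lam ^ 2 ≠ lam)
    (B : Finset (ZMod n)) (hB : IsComplete2Block ζ B) :
    IsComplete2Block ζ (blockStar ζ lam B) ∧
      (n % 4 = 1 →
        blockStar ζ lam (blockStar ζ lam B) = Finset.image (fun k => -k) B) ∧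
      (n % 4 = 3 →
        blockStar ζ lam (blockStar ζ lam B) = Finset.image (fun k => -(2 * k)) B) := by
  obtain ⟨hcoef, hcop, hd, hu⟩ := hB
  have h2 : (2 : L) = 0 := CharTwo.two_eq_zero
  have hquad := lam_quad hlam4 hlam2
  have hd' := blockStar_disjoint hζ hodd hlam4 hlam2 hd hu
  have hu' := blockStar_union hζ hodd hlam4 hlam2 hd hu
  have h4 : Finset.image (fun k => 2 * k)
      (Finset.image (fun k : ZMod n => 2 * k) (blockStar ζ lam B)) = blockStar ζ lam B :=
    image_four hodd hd' hu'
  have hmapmap : ((gB ζ (blockStar ζ lam B)).map (frobenius L 2)).map (frobenius L 2)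
      = gB ζ (blockStar ζ lam B) := by
    rw [map_gB hζ hodd, map_gB hζ hodd, h4]
  have hBsub : ∀ b ∈ B, b ≠ 0 := by
    intro b hb
    have hbT : b ∈ Finset.univ \ ({0} : Finset (ZMod n)) := hu ▸ Finset.mem_union_left _ hb
    simpa using (Finset.mem_sdiff.1 hbT).2
  have hcard : 2 * B.card = n - 1 := by
    have h1 : (Finset.univ \ {0} : Finset (ZMod n)).card = n - 1 := by
      rw [Finset.card_sdiff_of_subset (by simp), Finset.card_singleton, Finset.card_univ, ZMod.card]
    rw [← hu, Finset.card_union_of_disjoint hd,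
      Finset.card_image_of_injective _ (two_mul_injective hodd)] at h1
    omega
  have hn1 : 1 ≤ n := Nat.one_le_iff_ne_zero.2 (NeZero.ne n)
  refine ⟨⟨?_, ?_, hd', hu'⟩, ?_, ?_⟩
  · intro j
    have hcc := congrArg (fun p => Polynomial.coeff p j) hmapmap
    simp only [Polynomial.coeff_map, frobenius_def] at hcc
    calc (gB ζ (blockStar ζ lam B)).coeff j ^ (2 ^ 2)
        = (((gB ζ (blockStar ζ lam B)).coeff j) ^ 2) ^ 2 := by ring
      _ = (gB ζ (blockStar ζ lam B)).coeff j := hcc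
  · rw [gal_gB hζ hodd]
    exact coprime_gB hζ hd'
  · intro h41
    have hBcast : (B.card : L) = 0 := by
      have heven : 2 ∣ B.card := by omega
      obtain ⟨m, hm⟩ := heven
      rw [hm]; push_cast; rw [h2]; ring
    ext k
    simp only [mem_blockStar, Finset.mem_image]
    constructor
    · rintro ⟨hk0, hks⟩
      rw [sB_star_val hζ hodd hlam4 hlam2 hd hu hk0, hBcast, add_zero] at hks
      by_cases hkB : -k ∈ B
      · exact ⟨-k, hkB, neg_neg k⟩
      · exfalso
        rw [if_neg hkB, zero_add] at hks
        exact hlam2 hks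
    · rintro ⟨b, hb, rfl⟩
      have hb0 := hBsub b hb
      have hk0 : -b ≠ 0 := by simpa using hb0
      refine ⟨hk0, ?_⟩
      rw [sB_star_val hζ hodd hlam4 hlam2 hd hu hk0, hBcast, add_zero,
        if_pos (show -(-b) ∈ B by rwa [neg_neg])]
      linear_combination hquad - lam * h2
  · intro h43
    have hBcast : (B.card : L) = 1 := by
      have hoddc : B.card % 2 = 1 := by omega
      obtain ⟨m, hm⟩ : ∃ m, B.card = 2 * m + 1 := ⟨B.card / 2, by omega⟩
      rw [hm]; push_cast; rw [h2]; ring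
    have h2B : Finset.image (fun k : ZMod n => 2 * k) B = (Finset.univ \ {0}) \ B := by
      rw [← hu]; exact (Finset.union_sdiff_cancel_left hd).symm
    ext k
    simp only [mem_blockStar, Finset.mem_image]
    constructor
    · rintro ⟨hk0, hks⟩
      rw [sB_star_val hζ hodd hlam4 hlam2 hd hu hk0, hBcast] at hks
      by_cases hkB : -k ∈ B
      · exfalso
        rw [if_pos hkB] at hks
        exact hlam2 (by linear_combination hks - h2)
      · have hmk : -k ∈ Finset.image (fun k : ZMod n => 2 * k) B := by
          rw [h2B, Finset.mem_sdiff, Finset.mem_sdiff]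
          refine ⟨⟨Finset.mem_univ _, ?_⟩, hkB⟩
          simpa using hk0
        obtain ⟨b, hb, hbe⟩ := Finset.mem_image.1 hmk
        exact ⟨b, hb, by rw [hbe, neg_neg]⟩
    · rintro ⟨b, hb, rfl⟩
      have h2b : 2 * b ∈ Finset.image (fun k : ZMod n => 2 * k) B :=
        Finset.mem_image_of_mem _ hb
      have h2bT := h2B ▸ h2b
      rw [Finset.mem_sdiff, Finset.mem_sdiff] at h2bT
      obtain ⟨⟨_, h2b0⟩, h2bnB⟩ := h2bT
      have h2b0' : (2 : ZMod n) * b ≠ 0 := by simpa using h2b0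
      have hk0 : -(2 * b) ≠ 0 := by simpa using h2b0'
      refine ⟨hk0, ?_⟩
      rw [sB_star_val hζ hodd hlam4 hlam2 hd hu hk0, hBcast,
        if_neg (show ¬(-(-(2 * b)) ∈ B) by rwa [neg_neg])]
      linear_combination hquad - lam * h2
end
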